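/- In the Lax-pair setup with 1 ≤ k ≤ s ≤ N, let m be the solution of the discrete Riemann–Hilbert problem on {π_0,…,π_{s−1}} and m′ the solution on {π_0,…,π_s}, both with jump matrices w(π_x) = [[0, ω(x)],[0,0]] and asymptotics m(ζ)·diag(ζ^{−k},ζ^{k}) → I, m′(ζ)·diag(ζ^{−k},ζ^{k}) → I as ζ → ∞. Then the function ζ ↦ m(σζ)·D(ζ)·m′(ζ)^{−1}, where D(ζ) = diag(d_1(ζ), d_2(ζ)) (this function is defined off the finite set {π_0,…,π_s}, since det m′ ≡ 1 there), extends to a function M analytic on all of ℂ. -/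

import Mathlib

open Filter Topology Matrix Polynomial

noncomputable section

/-- 2×2 complex matrices. -/
abbrev Mat2 : Type := Matrix (Fin 2) (Fin 2) ℂ

/-- Entrywise complex differentiability (= analyticity) of a matrix-valued function on a set. -/
def EntryDiffOn (m : ℂ → Mat2) (U : Set ℂ) : Prop :=
  ∀ i j, DifferentiableOn ℂ (fun ζ => m ζ i j) U

/-- `m` solves the discrete Riemann–Hilbert problem `(Z, w)`: `m` is analytic off `Z`, has at
most a simple pole at each `x ∈ Z` (i.e. `ζ ↦ (ζ - x) • m ζ` extends analytically to a
neighbourhood of `x`), and the value at `x` of this extension (the residue of `m` at `x`)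
equals the limit of `m(ζ) * w(x)` as `ζ → x`. -/
def SolvesDRHP (Z : Finset ℂ) (w : ℂ → Mat2) (m : ℂ → Mat2) : Prop :=
  EntryDiffOn m ((Z : Set ℂ))ᶜ ∧
  ∀ x ∈ Z, ∃ g : ℂ → Mat2,
    EntryDiffOn g (((Z : Set ℂ))ᶜ ∪ {x}) ∧
    (∀ ζ, ζ ∉ (Z : Set ℂ) → g ζ = (ζ - x) • m ζ) ∧
    Filter.Tendsto (fun ζ => m ζ * w x) (𝓝[≠] x) (𝓝 (g x))

/-- The asymptotic condition `m(ζ) · diag(ζ^{-k}, ζ^k) → I` as `ζ → ∞`. -/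
def AsympId (k : ℕ) (m : ℂ → Mat2) : Prop :=
  Filter.Tendsto (fun ζ : ℂ => m ζ * Matrix.diagonal ![ζ⁻¹ ^ k, ζ ^ k])
    (Bornology.cobounded ℂ) (𝓝 1)

/-- The finite set `{π 0, …, π (s-1)}` regarded as a finite subset of `ℂ`. -/
def Zset (π : ℕ → ℝ) (s : ℕ) : Finset ℂ :=
  (Finset.range s).image fun x => (π x : ℂ)

lemma entry_tendsto {f : ℂ → Mat2} {l : Filter ℂ} {A : Mat2} (h : Tendsto f l (𝓝 A))
    (i j : Fin 2) : Tendsto (fun ζ => f ζ i j) l (𝓝 (A i j)) :=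
  ((continuous_apply j).tendsto _).comp (((continuous_apply i).tendsto _).comp h)

lemma finset_compl_open (S : Finset ℂ) : IsOpen ((S : Set ℂ))ᶜ :=
  (S.finite_toSet.isClosed).isOpen_compl

lemma EntryDiffOn.mul {P Q : ℂ → Mat2} {U : Set ℂ} (hP : EntryDiffOn P U)
    (hQ : EntryDiffOn Q U) : EntryDiffOn (fun ζ => P ζ * Q ζ) U := by
  intro i j
  have : (fun ζ => (P ζ * Q ζ) i j) = fun ζ => P ζ i 0 * Q ζ 0 j + P ζ i 1 * Q ζ 1 j := by
    funext ζ; simp [Matrix.mul_apply, Fin.sum_univ_two]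
  rw [this]
  exact ((hP i 0).mul (hQ 0 j)).add ((hP i 1).mul (hQ 1 j))

lemma EntryDiffOn.adj {P : ℂ → Mat2} {U : Set ℂ} (hP : EntryDiffOn P U) :
    EntryDiffOn (fun ζ => (P ζ).adjugate) U := by
  intro i j
  fin_cases i <;> fin_cases j <;>
    simp only [Matrix.adjugate_fin_two, Matrix.cons_val_zero, Matrix.cons_val_one,
      Matrix.head_cons, Matrix.of_apply, Matrix.cons_val', Matrix.head_fin_const,
      Matrix.empty_val'] <;>
    first
      | exact hP 1 1 | exact (hP 0 1).neg | exact (hP 1 0).neg | exact hP 0 0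

lemma glue_scalar (S : Finset ℂ) (F : ℂ → ℂ) (hF : DifferentiableOn ℂ F ((S : Set ℂ))ᶜ)
    (h : ∀ x ∈ S, ∃ (E : ℂ → ℂ) (U : Set ℂ), IsOpen U ∧ x ∈ U ∧ DifferentiableOn ℂ E U ∧
      ∀ ζ ∈ U, ζ ≠ x → E ζ = F ζ) :
    ∃ G : ℂ → ℂ, Differentiable ℂ G ∧ ∀ ζ ∉ (S : Set ℂ), G ζ = F ζ := by
  classical
  choose E U hUo hxU hEd hEF using h
  refine ⟨fun ζ => if hζ : ζ ∈ S then E ζ hζ ζ else F ζ, ?_, fun ζ hζ => dif_neg hζ⟩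
  intro z
  by_cases hz : z ∈ S
  · have hopen : IsOpen (U z hz ∩ ((↑(S.erase z) : Set ℂ))ᶜ) :=
      (hUo z hz).inter (finset_compl_open _)
    have hmem : z ∈ U z hz ∩ ((↑(S.erase z) : Set ℂ))ᶜ := ⟨hxU z hz, by simp⟩
    have heq : ∀ ζ ∈ U z hz ∩ ((↑(S.erase z) : Set ℂ))ᶜ,
        (fun ζ => if hζ : ζ ∈ S then E ζ hζ ζ else F ζ) ζ = E z hz ζ := by
      intro ζ hζ
      by_cases hζz : ζ = z
      · subst hζz; simp [dif_pos hz]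
      · have hζS : ζ ∉ S := by
          intro hmemS
          exact hζ.2 (by simpa [Finset.mem_erase] using And.intro hmemS hζz)
        simp only [dif_neg hζS]
        exact (hEF z hz ζ hζ.1 hζz).symm
    have hEz : DifferentiableAt ℂ (E z hz) z :=
      (hEd z hz).differentiableAt ((hUo z hz).mem_nhds (hxU z hz))
    exact hEz.congr_of_eventuallyEq <|
      Filter.eventuallyEq_of_mem (hopen.mem_nhds hmem) heq
  · have hFz : DifferentiableAt ℂ F z :=
      hF.differentiableAt ((finset_compl_open S).mem_nhds hz)
    refine hFz.congr_of_eventuallyEq <|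
      Filter.eventuallyEq_of_mem ((finset_compl_open S).mem_nhds hz) ?_
    intro ζ hζ; exact dif_neg hζ

lemma glue_mat (S : Finset ℂ) (F : ℂ → Mat2) (hF : EntryDiffOn F ((S : Set ℂ))ᶜ)
    (h : ∀ x ∈ S, ∃ (E : ℂ → Mat2) (U : Set ℂ), IsOpen U ∧ x ∈ U ∧ EntryDiffOn E U ∧
      ∀ ζ ∈ U, ζ ≠ x → E ζ = F ζ) :
    ∃ M : ℂ → Mat2, (∀ i j, Differentiable ℂ fun ζ => M ζ i j) ∧
      ∀ ζ ∉ (S : Set ℂ), M ζ = F ζ := by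
  classical
  choose E U hUo hxU hEd hEF using h
  refine ⟨fun ζ => if hζ : ζ ∈ S then E ζ hζ ζ else F ζ, ?_, fun ζ hζ => dif_neg hζ⟩
  intro i j z
  by_cases hz : z ∈ S
  · have hopen : IsOpen (U z hz ∩ ((↑(S.erase z) : Set ℂ))ᶜ) :=
      (hUo z hz).inter (finset_compl_open _)
    have hmem : z ∈ U z hz ∩ ((↑(S.erase z) : Set ℂ))ᶜ := ⟨hxU z hz, by simp⟩
    have heq : ∀ ζ ∈ U z hz ∩ ((↑(S.erase z) : Set ℂ))ᶜ,
        (fun ζ => (if hζ : ζ ∈ S then E ζ hζ ζ else F ζ) i j) ζ = E z hz ζ i j := by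
      intro ζ hζ
      by_cases hζz : ζ = z
      · subst hζz; simp [dif_pos hz]
      · have hζS : ζ ∉ S := by
          intro hmemS
          exact hζ.2 (by simpa [Finset.mem_erase] using And.intro hmemS hζz)
        simp only [dif_neg hζS]
        exact congrFun (congrFun (hEF z hz ζ hζ.1 hζz).symm i) j
    have hEz : DifferentiableAt ℂ (fun ζ => E z hz ζ i j) z :=
      (hEd z hz i j).differentiableAt ((hUo z hz).mem_nhds (hxU z hz))
    exact hEz.congr_of_eventuallyEq <|
      Filter.eventuallyEq_of_mem (hopen.mem_nhds hmem) heq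
  · have hFz : DifferentiableAt ℂ (fun ζ => F ζ i j) z :=
      (hF i j).differentiableAt ((finset_compl_open S).mem_nhds hz)
    refine hFz.congr_of_eventuallyEq <|
      Filter.eventuallyEq_of_mem ((finset_compl_open S).mem_nhds hz) ?_
    intro ζ hζ
    show (if hζ : ζ ∈ S then E ζ hζ ζ else F ζ) i j = F ζ i j
    rw [dif_neg (by simpa using hζ)]

lemma diff_compl_open (Z : Finset ℂ) (a : ℂ) : IsOpen (((Z : Set ℂ)) \ {a})ᶜ :=
  ((Z.finite_toSet.diff).isClosed).isOpen_compl

lemma union_eq_diff_compl (Z : Finset ℂ) (a : ℂ) :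
    ((Z : Set ℂ))ᶜ ∪ {a} = (((Z : Set ℂ)) \ {a})ᶜ := by
  ext ζ; by_cases h : ζ = a <;> simp [h]

lemma residue_facts {Z : Finset ℂ} {w m : ℂ → Mat2} (hm : SolvesDRHP Z w m)
    {a : ℂ} (ha : a ∈ Z) {c : ℂ} (hc : c ≠ 0) (hwa : w a = !![0, c; 0, 0]) :
    ∃ (g : ℂ → Mat2) (α : Fin 2 → ℂ),
      EntryDiffOn g ((((Z : Set ℂ)) \ {a})ᶜ) ∧
      (∀ ζ, ζ ∉ (Z : Set ℂ) → g ζ = (ζ - a) • m ζ) ∧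
      (∀ i, g a i 0 = 0) ∧ (∀ i, g a i 1 = c * α i) ∧
      (∀ i, Tendsto (fun ζ => m ζ i 0) (𝓝[≠] a) (𝓝 (α i))) ∧
      (∀ i, HasDerivAt (fun ζ => g ζ i 0) (α i) a) := by
  obtain ⟨g, hgd, hgm, hgt⟩ := hm.2 a ha
  rw [union_eq_diff_compl] at hgd
  have haW : a ∈ (((Z : Set ℂ)) \ {a})ᶜ := by simp
  have hWnhds : (((Z : Set ℂ)) \ {a})ᶜ ∈ 𝓝 a := (diff_compl_open Z a).mem_nhds haW
  have hi01 : ∀ i : Fin 2, g a i 0 = 0 := by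
    intro i
    have ht := entry_tendsto hgt i 0
    have he : (fun ζ => (m ζ * w a) i 0) = fun _ => (0 : ℂ) := by
      funext ζ; simp [hwa, Matrix.mul_apply, Fin.sum_univ_two]
    rw [he] at ht
    exact tendsto_nhds_unique ht tendsto_const_nhds
  refine ⟨g, fun i => g a i 1 / c, hgd, hgm, hi01, ?_, ?_, ?_⟩
  · intro i; field_simp
  case refine_2 =>
    intro i
    have ht := entry_tendsto hgt i 1
    have he : (fun ζ => (m ζ * w a) i 1) = fun ζ => m ζ i 0 * c := by
      funext ζ; simp [hwa, Matrix.mul_apply, Fin.sum_univ_two]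
    rw [he] at ht
    have := ht.mul_const c⁻¹
    refine this.congr ?_
    intro ζ; field_simp
  case refine_3 =>
    intro i
    set φ := dslope (fun ζ => g ζ i 0) a with hφdef
    have hφd : DifferentiableOn ℂ φ ((((Z : Set ℂ)) \ {a})ᶜ) :=
      (Complex.differentiableOn_dslope hWnhds).mpr (hgd i 0)
    have hφa : DifferentiableAt ℂ φ a := hφd.differentiableAt hWnhds
    have hφeq : ∀ᶠ ζ in 𝓝[≠] a, φ ζ = m ζ i 0 := by
      filter_upwards [self_mem_nhdsWithin, mem_nhdsWithin_of_mem_nhds hWnhds] with ζ hζa hζW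
      have hζa' : ζ ≠ a := hζa
      have hζZ : ζ ∉ (Z : Set ℂ) := by
        intro hmem
        exact hζW ⟨hmem, hζa'⟩
      have : g ζ i 0 = (ζ - a) * m ζ i 0 := by
        rw [hgm ζ hζZ]; simp [Matrix.smul_apply, smul_eq_mul]
      rw [hφdef, dslope_of_ne _ hζa', slope_def_field, hi01 i, this]
      have hne : ζ - a ≠ 0 := sub_ne_zero.mpr hζa'
      field_simp
      ring
    -- m · i 0 tends to φ a
    have hmt : Tendsto (fun ζ => m ζ i 0) (𝓝[≠] a) (𝓝 (φ a)) :=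
      ((hφa.continuousAt.tendsto).mono_left nhdsWithin_le_nhds).congr' hφeq
    -- and also to α i (proved above)
    have hmt2 : Tendsto (fun ζ => m ζ i 0) (𝓝[≠] a) (𝓝 (g a i 1 / c)) := by
      have ht := entry_tendsto hgt i 1
      have he : (fun ζ => (m ζ * w a) i 1) = fun ζ => m ζ i 0 * c := by
        funext ζ; simp [hwa, Matrix.mul_apply, Fin.sum_univ_two]
      rw [he] at ht
      refine (ht.mul_const c⁻¹).congr ?_
      intro ζ; field_simp
    have hval : φ a = g a i 1 / c := tendsto_nhds_unique hmt hmt2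
    have hda : DifferentiableAt ℂ (fun ζ => g ζ i 0) a := (hgd i 0).differentiableAt hWnhds
    have := hda.hasDerivAt
    rwa [show deriv (fun ζ => g ζ i 0) a = g a i 1 / c from by
      rw [← dslope_same, ← hφdef, hval]] at this

lemma det_one {Z : Finset ℂ} {w m : ℂ → Mat2} (hm : SolvesDRHP Z w m) {k : ℕ}
    (hma : AsympId k m) (hjump : ∀ x ∈ Z, ∃ c : ℂ, c ≠ 0 ∧ w x = !![0, c; 0, 0]) :
    ∀ ζ ∉ (Z : Set ℂ), det (m ζ) = 1 := by
  have hδ : DifferentiableOn ℂ (fun ζ => det (m ζ)) ((Z : Set ℂ))ᶜ := by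
    have : (fun ζ => det (m ζ)) =
        fun ζ => m ζ 0 0 * m ζ 1 1 - m ζ 0 1 * m ζ 1 0 := by
      funext ζ; exact Matrix.det_fin_two _
    rw [this]
    exact ((hm.1 0 0).mul (hm.1 1 1)).sub ((hm.1 0 1).mul (hm.1 1 0))
  have hloc : ∀ x ∈ Z, ∃ (E : ℂ → ℂ) (U : Set ℂ), IsOpen U ∧ x ∈ U ∧
      DifferentiableOn ℂ E U ∧ ∀ ζ ∈ U, ζ ≠ x → E ζ = (fun ζ => det (m ζ)) ζ := by
    intro x hx
    obtain ⟨c, hc, hwx⟩ := hjump x hx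
    obtain ⟨g, α, hgd, hgm, hg0, hg1, -, hgder⟩ := residue_facts hm hx hc hwx
    set W := (((Z : Set ℂ)) \ {x})ᶜ with hW
    have hWo : IsOpen W := diff_compl_open Z x
    have hxW : x ∈ W := by simp [hW]
    have hWn : W ∈ 𝓝 x := hWo.mem_nhds hxW
    set dg := fun ζ => det (g ζ) with hdg
    have hdgd : DifferentiableOn ℂ dg W := by
      have : dg = fun ζ => g ζ 0 0 * g ζ 1 1 - g ζ 0 1 * g ζ 1 0 := by
        funext ζ; exact Matrix.det_fin_two _
      rw [this]
      exact ((hgd 0 0).mul (hgd 1 1)).sub ((hgd 0 1).mul (hgd 1 0))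
    have hdg0 : dg x = 0 := by
      show det (g x) = 0
      rw [Matrix.det_fin_two, hg0 0, hg0 1, hg1 0]; ring
    have hdgder : HasDerivAt dg 0 x := by
      have h00 : HasDerivAt (fun ζ => g ζ 0 0) (α 0) x := hgder 0
      have h10 : HasDerivAt (fun ζ => g ζ 1 0) (α 1) x := hgder 1
      have h01 : HasDerivAt (fun ζ => g ζ 0 1) (deriv (fun ζ => g ζ 0 1) x) x :=
        ((hgd 0 1).differentiableAt hWn).hasDerivAt
      have h11 : HasDerivAt (fun ζ => g ζ 1 1) (deriv (fun ζ => g ζ 1 1) x) x :=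
        ((hgd 1 1).differentiableAt hWn).hasDerivAt
      have hcomb := ((h00.mul h11).sub (h01.mul h10))
      have he : dg = fun ζ => g ζ 0 0 * g ζ 1 1 - g ζ 0 1 * g ζ 1 0 := by
        funext ζ; exact Matrix.det_fin_two _
      rw [he]
      refine hcomb.congr_deriv ?_
      rw [hg0 0, hg0 1, hg1 0, hg1 1]; ring
    refine ⟨fun ζ => dslope (dslope dg x) x ζ, W, hWo, hxW, ?_, ?_⟩
    · exact (Complex.differentiableOn_dslope hWn).mpr
        ((Complex.differentiableOn_dslope hWn).mpr hdgd)
    · intro ζ hζW hζx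
      show dslope (dslope dg x) x ζ = det (m ζ)
      have hζZ : ζ ∉ (Z : Set ℂ) := by
        intro hmem; exact hζW ⟨hmem, hζx⟩
      have hne : ζ - x ≠ 0 := sub_ne_zero.mpr hζx
      have hd1 : dslope dg x ζ = dg ζ / (ζ - x) := by
        rw [dslope_of_ne _ hζx, slope_def_field, hdg0]; ring
      have hd1x : dslope dg x x = 0 := by
        rw [dslope_same]; exact hdgder.deriv
      rw [dslope_of_ne _ hζx, slope_def_field, hd1, hd1x]
      have hdet : dg ζ = (ζ - x) ^ 2 * det (m ζ) := by
        show det (g ζ) = _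
        rw [hgm ζ hζZ, Matrix.det_smul]
        norm_num
      rw [hdet]
      field_simp
      ring
  obtain ⟨G, hGd, hGF⟩ := glue_scalar Z (fun ζ => det (m ζ)) hδ hloc
  have h1 : Tendsto G (Bornology.cobounded ℂ) (𝓝 1) := by
    have hdet : Tendsto (fun ζ : ℂ => det (m ζ * Matrix.diagonal ![ζ⁻¹ ^ k, ζ ^ k]))
        (Bornology.cobounded ℂ) (𝓝 (det (1 : Mat2))) :=
      ((Continuous.matrix_det continuous_id).tendsto _).comp hma
    rw [Matrix.det_one] at hdet
    refine hdet.congr' ?_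
    have hb : ((Z : Set ℂ) ∪ {0})ᶜ ∈ Bornology.cobounded ℂ := by
      rw [← Bornology.isBounded_def]
      exact (Z.finite_toSet.union (Set.finite_singleton 0)).isBounded
    filter_upwards [hb] with ζ hζ
    have hζZ : ζ ∉ (Z : Set ℂ) := fun h => hζ (Or.inl h)
    have hζ0 : ζ ≠ 0 := fun h => hζ (Or.inr h)
    rw [Matrix.det_mul, Matrix.det_diagonal, Fin.prod_univ_two]
    simp only [Matrix.cons_val_zero, Matrix.cons_val_one, Matrix.head_cons]
    rw [hGF ζ hζZ]
    field_simp
    rw [one_div, inv_pow, mul_assoc, inv_mul_cancel₀ (pow_ne_zero _ hζ0), mul_one]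
  have hconst : ∀ z : ℂ, G z = 1 := by
    intro z
    refine Differentiable.apply_eq_of_tendsto_cocompact hGd z ?_
    rwa [← Metric.cobounded_eq_cocompact]
  intro ζ hζ
  rw [← hGF ζ hζ, hconst]

lemma triple_entry (A C : Mat2) (u v : ℂ) (i j : Fin 2) :
    (A * Matrix.diagonal ![u, v] * C) i j
      = A i 0 * (u * C 0 j) + A i 1 * (v * C 1 j) := by
  simp [Matrix.mul_apply, Fin.sum_univ_two, Matrix.diagonal]
  ring

lemma adj00 (A : Mat2) : A.adjugate 0 0 = A 1 1 := by rw [Matrix.adjugate_fin_two]; simp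

lemma adj01 (A : Mat2) : A.adjugate 0 1 = -(A 0 1) := by rw [Matrix.adjugate_fin_two]; simp

lemma adj10 (A : Mat2) : A.adjugate 1 0 = -(A 1 0) := by rw [Matrix.adjugate_fin_two]; simp

lemma adj11 (A : Mat2) : A.adjugate 1 1 = A 0 0 := by rw [Matrix.adjugate_fin_two]; simp

lemma local_ext_main (η : ℂ) (hη : η ≠ 0) (σ : ℂ → ℂ) (hσds : ∀ z, HasDerivAt σ η z)
    (a b : ℂ) (hab : σ b = a)
    (d₁ d₂ : ℂ → ℂ) (hd₁ : Differentiable ℂ d₁) (hd₂ : Differentiable ℂ d₂)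
    (c c' : ℂ) (hrel : c * d₂ b = η * d₁ b * c')
    (g g' : ℂ → Mat2) (Wa Wb : Set ℂ) (hWao : IsOpen Wa) (hWbo : IsOpen Wb)
    (haWa : a ∈ Wa) (hbWb : b ∈ Wb)
    (hgd : EntryDiffOn g Wa) (hg'd : EntryDiffOn g' Wb)
    (α α' : Fin 2 → ℂ)
    (hg0 : ∀ i, g a i 0 = 0) (hg1 : ∀ i, g a i 1 = c * α i)
    (hgder : ∀ i, HasDerivAt (fun ζ => g ζ i 0) (α i) a)
    (hg'0 : ∀ i, g' b i 0 = 0) (hg'1 : ∀ i, g' b i 1 = c' * α' i)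
    (hg'der : ∀ i, HasDerivAt (fun ζ => g' ζ i 0) (α' i) b) :
    ∃ (E : ℂ → Mat2) (U : Set ℂ), IsOpen U ∧ b ∈ U ∧ U ⊆ Wb ∧ EntryDiffOn E U ∧
      ∀ ζ ∈ U, ζ ≠ b →
        E ζ = (η * (ζ - b) * (ζ - b))⁻¹ •
          (g (σ ζ) * Matrix.diagonal ![d₁ ζ, d₂ ζ] * (g' ζ).adjugate) := by
  have hσdiff : Differentiable ℂ σ := fun z => (hσds z).differentiableAt
  set U : Set ℂ := σ ⁻¹' Wa ∩ Wb with hU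
  have hUo : IsOpen U := (hWao.preimage hσdiff.continuous).inter hWbo
  have hbU : b ∈ U := ⟨by simp [hab, haWa], hbWb⟩
  have hUn : U ∈ 𝓝 b := hUo.mem_nhds hbU
  set Nf : ℂ → Mat2 := fun ζ => g (σ ζ) * Matrix.diagonal ![d₁ ζ, d₂ ζ] * (g' ζ).adjugate
    with hNf
  -- differentiability of Nf entries on U
  have hgσ : EntryDiffOn (fun ζ => g (σ ζ)) U := by
    intro i j
    exact ((hgd i j).comp (hσdiff.differentiableOn)
      (fun ζ hζ => hζ.1))
  have hDd : EntryDiffOn (fun ζ => (Matrix.diagonal ![d₁ ζ, d₂ ζ] : Mat2)) U := by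
    intro i j
    fin_cases i <;> fin_cases j <;>
      simp only [Matrix.diagonal_apply_eq, Matrix.diagonal_apply_ne,
        Matrix.cons_val_zero, Matrix.cons_val_one, Matrix.head_cons, Fin.zero_eta, Fin.mk_one,
        ne_eq, Fin.one_eq_zero_iff, Fin.zero_eq_one_iff, not_false_eq_true,
        OfNat.ofNat_ne_zero, OfNat.ofNat_ne_one] <;>
      first
        | exact hd₁.differentiableOn
        | exact hd₂.differentiableOn
        | exact differentiableOn_const 0
  have hadjd : EntryDiffOn (fun ζ => (g' ζ).adjugate) U :=
    EntryDiffOn.adj (fun i j => (hg'd i j).mono Set.inter_subset_right)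
  have hNd : EntryDiffOn Nf U :=
    EntryDiffOn.mul (EntryDiffOn.mul hgσ hDd) hadjd
  -- value and derivative of entries of Nf at b
  have hgσ0 : ∀ i : Fin 2, g (σ b) i 0 = 0 := by intro i; rw [hab]; exact hg0 i
  have hgσ1 : ∀ i : Fin 2, g (σ b) i 1 = c * α i := by intro i; rw [hab]; exact hg1 i
  have hA0der : ∀ i : Fin 2, HasDerivAt (fun ζ => g (σ ζ) i 0) (α i * η) b := by
    intro i
    have h1 : HasDerivAt (fun ζ => g ζ i 0) (α i) (σ b) := hab ▸ hgder i
    exact h1.comp b (hσds b)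
  have hA1 : ∀ i : Fin 2, HasDerivAt (fun ζ => g (σ ζ) i 1)
      (deriv (fun ζ => g (σ ζ) i 1) b) b := by
    intro i
    have : DifferentiableAt ℂ (fun ζ => g (σ ζ) i 1) b := by
      have h1 : DifferentiableAt ℂ (fun z => g z i 1) (σ b) :=
        (hgd i 1).differentiableAt (hWao.mem_nhds (hab ▸ haWa))
      exact h1.comp b (hσdiff b)
    exact this.hasDerivAt
  have hN0 : ∀ i j : Fin 2, Nf b i j = 0 := by
    intro i j
    rw [hNf]
    simp only [triple_entry]
    fin_cases j <;>
      simp [adj10, adj11, hg'0 0, hg'0 1, hgσ0 i]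
  have hNder : ∀ i j : Fin 2, HasDerivAt (fun ζ => Nf ζ i j) 0 b := by
    intro i j
    have hexp : (fun ζ => Nf ζ i j) =
        fun ζ => g (σ ζ) i 0 * (d₁ ζ * (g' ζ).adjugate 0 j)
          + g (σ ζ) i 1 * (d₂ ζ * (g' ζ).adjugate 1 j) := by
      funext ζ; rw [hNf]; exact triple_entry _ _ _ _ i j
    rw [hexp]
    have hd1b : HasDerivAt d₁ (deriv d₁ b) b := (hd₁ b).hasDerivAt
    have hd2b : HasDerivAt d₂ (deriv d₂ b) b := (hd₂ b).hasDerivAt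
    fin_cases j <;> simp only [Fin.zero_eta, Fin.mk_one, Fin.isValue]
    · -- j = 0 : adj 0 0 = g' 1 1, adj 1 0 = -(g' 1 0)
      have hC0 : HasDerivAt (fun ζ => g' ζ 1 1) (deriv (fun ζ => g' ζ 1 1) b) b :=
        ((hg'd 1 1).differentiableAt (hWbo.mem_nhds hbWb)).hasDerivAt
      have hC1 : HasDerivAt (fun ζ => -(g' ζ 1 0)) (-(α' 1)) b := (hg'der 1).neg
      have combo := ((hA0der i).mul (hd1b.mul hC0)).add ((hA1 i).mul (hd2b.mul hC1))
      have heq : (fun ζ => g (σ ζ) i 0 * (d₁ ζ * (g' ζ).adjugate 0 0)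
          + g (σ ζ) i 1 * (d₂ ζ * (g' ζ).adjugate 1 0))
          = fun ζ => g (σ ζ) i 0 * (d₁ ζ * g' ζ 1 1)
            + g (σ ζ) i 1 * (d₂ ζ * -(g' ζ 1 0)) := by
        funext ζ; rw [adj00, adj10]
      rw [heq]
      refine combo.congr_deriv ?_
      simp only [Pi.mul_apply, hgσ0 i, hgσ1 i, hg'1 1, hg'0 1]
      linear_combination (-(α i * α' 1)) * hrel
    · -- j = 1 : adj 0 1 = -(g' 0 1), adj 1 1 = g' 0 0
      have hC0 : HasDerivAt (fun ζ => -(g' ζ 0 1)) (deriv (fun ζ => -(g' ζ 0 1)) b) b :=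
        (((hg'd 0 1).differentiableAt (hWbo.mem_nhds hbWb)).neg).hasDerivAt
      have hC1 : HasDerivAt (fun ζ => g' ζ 0 0) (α' 0) b := hg'der 0
      have combo := ((hA0der i).mul (hd1b.mul hC0)).add ((hA1 i).mul (hd2b.mul hC1))
      have heq : (fun ζ => g (σ ζ) i 0 * (d₁ ζ * (g' ζ).adjugate 0 1)
          + g (σ ζ) i 1 * (d₂ ζ * (g' ζ).adjugate 1 1))
          = fun ζ => g (σ ζ) i 0 * (d₁ ζ * -(g' ζ 0 1))
            + g (σ ζ) i 1 * (d₂ ζ * g' ζ 0 0) := by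
        funext ζ; rw [adj01, adj11]
      rw [heq]
      refine combo.congr_deriv ?_
      simp only [Pi.mul_apply, hgσ0 i, hgσ1 i, hg'1 0, hg'0 0]
      linear_combination (α i * α' 0) * hrel
  -- the extension
  refine ⟨fun ζ => Matrix.of fun i j => η⁻¹ * dslope (dslope (fun z => Nf z i j) b) b ζ,
    U, hUo, hbU, Set.inter_subset_right, ?_, ?_⟩
  · intro i j
    have : (fun ζ => (Matrix.of fun i j =>
        η⁻¹ * dslope (dslope (fun z => Nf z i j) b) b ζ : Mat2) i j)
        = fun ζ => η⁻¹ * dslope (dslope (fun z => Nf z i j) b) b ζ := rfl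
    rw [this]
    exact ((Complex.differentiableOn_dslope hUn).mpr
      ((Complex.differentiableOn_dslope hUn).mpr (hNd i j))).const_mul η⁻¹
  · intro ζ hζU hζb
    have hζb' : ζ - b ≠ 0 := sub_ne_zero.mpr hζb
    ext i j
    have hd1 : dslope (fun z => Nf z i j) b ζ = Nf ζ i j / (ζ - b) := by
      rw [dslope_of_ne _ hζb, slope_def_field, hN0 i j]; ring
    have hd1b : dslope (fun z => Nf z i j) b b = 0 := by
      rw [dslope_same]; exact (hNder i j).deriv
    have hds2 : dslope (dslope (fun z => Nf z i j) b) b ζ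
        = Nf ζ i j / ((ζ - b) * (ζ - b)) := by
      rw [dslope_of_ne _ hζb, slope_def_field, hd1, hd1b, sub_zero, div_div]
    show η⁻¹ * dslope (dslope (fun z => Nf z i j) b) b ζ
        = ((η * (ζ - b) * (ζ - b))⁻¹ •
            (g (σ ζ) * Matrix.diagonal ![d₁ ζ, d₂ ζ] * (g' ζ).adjugate)) i j
    rw [hds2, Matrix.smul_apply, smul_eq_mul]
    show η⁻¹ * (Nf ζ i j / ((ζ - b) * (ζ - b)))
        = (η * (ζ - b) * (ζ - b))⁻¹ * Nf ζ i j
    simp only [div_eq_mul_inv, mul_inv]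
    ring

lemma local_ext_zero (x : ℂ)
    (d₁ d₂ : ℂ → ℂ) (hd₁ : Differentiable ℂ d₁) (hd₂ : Differentiable ℂ d₂)
    (hd₁0 : d₁ x = 0)
    (m0 g' : ℂ → Mat2) (Wx Wb : Set ℂ) (hWxo : IsOpen Wx) (hWbo : IsOpen Wb)
    (hxWx : x ∈ Wx) (hxWb : x ∈ Wb)
    (hm0d : EntryDiffOn m0 Wx) (hg'd : EntryDiffOn g' Wb)
    (hg'0 : ∀ i, g' x i 0 = 0) :
    ∃ (E : ℂ → Mat2) (U : Set ℂ), IsOpen U ∧ x ∈ U ∧ U ⊆ Wb ∧ EntryDiffOn E U ∧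
      ∀ ζ ∈ U, ζ ≠ x →
        E ζ = (ζ - x)⁻¹ • (m0 ζ * Matrix.diagonal ![d₁ ζ, d₂ ζ] * (g' ζ).adjugate) := by
  set U : Set ℂ := Wx ∩ Wb with hU
  have hUo : IsOpen U := hWxo.inter hWbo
  have hxU : x ∈ U := ⟨hxWx, hxWb⟩
  have hUn : U ∈ 𝓝 x := hUo.mem_nhds hxU
  set Nf : ℂ → Mat2 := fun ζ => m0 ζ * Matrix.diagonal ![d₁ ζ, d₂ ζ] * (g' ζ).adjugate
    with hNf
  have hDd : EntryDiffOn (fun ζ => (Matrix.diagonal ![d₁ ζ, d₂ ζ] : Mat2)) U := by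
    intro i j
    fin_cases i <;> fin_cases j <;>
      simp only [Matrix.diagonal_apply_eq, Matrix.diagonal_apply_ne,
        Matrix.cons_val_zero, Matrix.cons_val_one, Matrix.head_cons, Fin.zero_eta, Fin.mk_one,
        ne_eq, Fin.one_eq_zero_iff, Fin.zero_eq_one_iff, not_false_eq_true,
        OfNat.ofNat_ne_zero, OfNat.ofNat_ne_one] <;>
      first
        | exact hd₁.differentiableOn
        | exact hd₂.differentiableOn
        | exact differentiableOn_const 0
  have hadjd : EntryDiffOn (fun ζ => (g' ζ).adjugate) U :=
    EntryDiffOn.adj (fun i j => (hg'd i j).mono Set.inter_subset_right)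
  have hNd : EntryDiffOn Nf U :=
    EntryDiffOn.mul (EntryDiffOn.mul (fun i j => (hm0d i j).mono Set.inter_subset_left) hDd)
      hadjd
  have hN0 : ∀ i j : Fin 2, Nf x i j = 0 := by
    intro i j
    rw [hNf]
    simp only [triple_entry]
    fin_cases j <;>
      simp [adj10, adj11, hg'0 0, hg'0 1, hd₁0]
  refine ⟨fun ζ => Matrix.of fun i j => dslope (fun z => Nf z i j) x ζ,
    U, hUo, hxU, Set.inter_subset_right, ?_, ?_⟩
  · intro i j
    exact (Complex.differentiableOn_dslope hUn).mpr (hNd i j)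
  · intro ζ hζU hζx
    have hζx' : ζ - x ≠ 0 := sub_ne_zero.mpr hζx
    ext i j
    have hd1 : dslope (fun z => Nf z i j) x ζ = Nf ζ i j / (ζ - x) := by
      rw [dslope_of_ne _ hζx, slope_def_field, hN0 i j]; ring
    show dslope (fun z => Nf z i j) x ζ
        = ((ζ - x)⁻¹ • (m0 ζ * Matrix.diagonal ![d₁ ζ, d₂ ζ] * (g' ζ).adjugate)) i j
    rw [hd1, Matrix.smul_apply, smul_eq_mul]
    show Nf ζ i j / (ζ - x) = (ζ - x)⁻¹ * Nf ζ i j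
    rw [div_eq_mul_inv]; ring

/-- the second equation of the Lax pair; `m(σζ) D(ζ) m′(ζ)⁻¹` extends to an
entire (matrix-valued) function. -/
theorem stmt3 (N k s : ℕ) (hk1 : 1 ≤ k) (hks : k ≤ s) (hsN : s ≤ N)
    (π ω : ℕ → ℝ)
    (hπ : ∀ i ≤ N, ∀ j ≤ N, π i = π j → i = j)
    (hω : ∀ x ≤ N, 0 < ω x)
    (η c₀ : ℂ) (hη : η ≠ 0)
    (σ : ℂ → ℂ) (hσ : ∀ ζ, σ ζ = η * ζ + c₀)
    (hσπ : ∀ x < N, σ (π (x + 1) : ℂ) = (π x : ℂ))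
    (d₁ d₂ : ℂ → ℂ) (hd₁ : Differentiable ℂ d₁) (hd₂ : Differentiable ℂ d₂)
    (hd₁0 : d₁ (π 0 : ℂ) = 0)
    (hd : ∀ x, 1 ≤ x → x ≤ N → d₂ (π x : ℂ) ≠ 0 ∧
      (ω (x - 1) : ℂ) / (ω x : ℂ) = η * d₁ (π x : ℂ) / d₂ (π x : ℂ))
    (w : ℂ → Mat2) (hw : ∀ x ≤ N, w (π x : ℂ) = !![0, (ω x : ℂ); 0, 0])
    (m m' : ℂ → Mat2)
    (hm : SolvesDRHP (Zset π s) w m) (hma : AsympId k m)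
    (hm' : SolvesDRHP (Zset π (s + 1)) w m') (hm'a : AsympId k m') :
    ∃ M : ℂ → Mat2, (∀ i j, Differentiable ℂ fun ζ => M ζ i j) ∧
      ∀ ζ : ℂ, ζ ∉ (Zset π (s + 1) : Set ℂ) →
        M ζ = m (σ ζ) * Matrix.diagonal ![d₁ ζ, d₂ ζ] * (m' ζ)⁻¹ := by
  have hπinjC : ∀ i ≤ N, ∀ j ≤ N, (π i : ℂ) = (π j : ℂ) → i = j := by
    intro i hi j hj h
    exact hπ i hi j hj (by exact_mod_cast h)
  have hσds : ∀ z : ℂ, HasDerivAt σ η z := by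
    intro z
    have h1 : HasDerivAt (fun ζ : ℂ => η * ζ + c₀) (η * 1) z :=
      ((hasDerivAt_id z).const_mul η).add_const c₀
    rw [mul_one] at h1
    have : σ = fun ζ : ℂ => η * ζ + c₀ := funext hσ
    rw [this]; exact h1
  have hσdiff : Differentiable ℂ σ := fun z => (hσds z).differentiableAt
  have hσinj : Function.Injective σ := by
    intro u v huv
    rw [hσ u, hσ v] at huv
    exact mul_left_cancel₀ hη (by linear_combination huv)
  have hωC : ∀ t ≤ N, (ω t : ℂ) ≠ 0 := fun t ht =>
    Complex.ofReal_ne_zero.mpr (hω t ht).ne'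
  have hσZ' : ∀ ζ : ℂ, ζ ∉ (Zset π (s + 1) : Set ℂ) → σ ζ ∉ (Zset π s : Set ℂ) := by
    intro ζ hζ hmem
    rw [Finset.mem_coe] at hmem
    simp only [Zset, Finset.mem_image, Finset.mem_range] at hmem
    obtain ⟨u, hus, hu⟩ := hmem
    have h2 : σ (π (u + 1) : ℂ) = (π u : ℂ) := hσπ u (hus.trans_le hsN)
    have h3 : ζ = (π (u + 1) : ℂ) := hσinj (by rw [h2, hu])
    apply hζ
    rw [Finset.mem_coe]
    simp only [Zset, Finset.mem_image, Finset.mem_range]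
    exact ⟨u + 1, by omega, h3.symm⟩
  have hjump' : ∀ x ∈ Zset π (s + 1), ∃ c : ℂ, c ≠ 0 ∧ w x = !![0, c; 0, 0] := by
    intro x hx
    simp only [Zset, Finset.mem_image, Finset.mem_range] at hx
    obtain ⟨t, ht, rfl⟩ := hx
    exact ⟨(ω t : ℂ), hωC t (by omega), hw t (by omega)⟩
  have hdet1 : ∀ ζ ∉ (Zset π (s + 1) : Set ℂ), det (m' ζ) = 1 :=
    det_one hm' hm'a hjump'
  have hinv : ∀ ζ, ζ ∉ (Zset π (s + 1) : Set ℂ) → (m' ζ)⁻¹ = (m' ζ).adjugate := by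
    intro ζ hζ
    rw [Matrix.inv_def, hdet1 ζ hζ, Ring.inverse_one, one_smul]
  have hDd : ∀ U : Set ℂ, EntryDiffOn (fun ζ => (Matrix.diagonal ![d₁ ζ, d₂ ζ] : Mat2)) U := by
    intro U i j
    fin_cases i <;> fin_cases j <;>
      simp only [Matrix.diagonal_apply_eq, Matrix.diagonal_apply_ne,
        Matrix.cons_val_zero, Matrix.cons_val_one, Matrix.head_cons, Fin.zero_eta, Fin.mk_one,
        ne_eq, Fin.one_eq_zero_iff, Fin.zero_eq_one_iff, not_false_eq_true,
        OfNat.ofNat_ne_zero, OfNat.ofNat_ne_one] <;>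
      first
        | exact hd₁.differentiableOn
        | exact hd₂.differentiableOn
        | exact differentiableOn_const 0
  have hFd : EntryDiffOn
      (fun ζ => m (σ ζ) * Matrix.diagonal ![d₁ ζ, d₂ ζ] * (m' ζ)⁻¹)
      ((Zset π (s + 1) : Set ℂ))ᶜ := by
    have hmσ : EntryDiffOn (fun ζ => m (σ ζ)) ((Zset π (s + 1) : Set ℂ))ᶜ := by
      intro i j
      exact (hm.1 i j).comp hσdiff.differentiableOn (fun ζ hζ => hσZ' ζ hζ)
    have hadjinv : EntryDiffOn (fun ζ => (m' ζ)⁻¹) ((Zset π (s + 1) : Set ℂ))ᶜ := by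
      intro i j
      refine ((EntryDiffOn.adj hm'.1) i j).congr ?_
      intro ζ hζ
      show (m' ζ)⁻¹ i j = (m' ζ).adjugate i j
      rw [hinv ζ hζ]
    exact EntryDiffOn.mul (EntryDiffOn.mul hmσ (hDd _)) hadjinv
  apply glue_mat (Zset π (s + 1)) _ hFd
  intro x hx
  simp only [Zset, Finset.mem_image, Finset.mem_range] at hx
  obtain ⟨t, hts, rfl⟩ := hx
  by_cases ht0 : t = 0
  · -- case x = π 0
    subst ht0
    have hb0Z' : (π 0 : ℂ) ∈ Zset π (s + 1) := by
      simp only [Zset, Finset.mem_image, Finset.mem_range]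
      exact ⟨0, by omega, rfl⟩
    obtain ⟨g', α', hg'd, hg'm, hg'0, hg'1, -, hg'der⟩ :=
      residue_facts hm' hb0Z' (hωC 0 (by omega)) (hw 0 (by omega))
    have hx0 : σ (π 0 : ℂ) ∉ (Zset π s : Set ℂ) := by
      intro hmem
      rw [Finset.mem_coe] at hmem
      simp only [Zset, Finset.mem_image, Finset.mem_range] at hmem
      obtain ⟨u, hus, hu⟩ := hmem
      have h2 : σ (π (u + 1) : ℂ) = (π u : ℂ) := hσπ u (hus.trans_le hsN)
      have h3 : (π 0 : ℂ) = (π (u + 1) : ℂ) := hσinj (by rw [h2, hu])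
      have := hπinjC 0 (by omega) (u + 1) (by omega) h3
      omega
    have hm0d : EntryDiffOn (fun ζ => m (σ ζ)) (σ ⁻¹' ((Zset π s : Set ℂ))ᶜ) := by
      intro i j
      exact (hm.1 i j).comp hσdiff.differentiableOn (fun ζ hζ => hζ)
    obtain ⟨E, U, hUo, hxU, hUsub, hEd, hEF⟩ :=
      local_ext_zero (π 0 : ℂ) d₁ d₂ hd₁ hd₂ hd₁0 (fun ζ => m (σ ζ)) g'
        (σ ⁻¹' ((Zset π s : Set ℂ))ᶜ) (((Zset π (s + 1) : Set ℂ)) \ {(π 0 : ℂ)})ᶜ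
        (((Zset π s).finite_toSet.isClosed).isOpen_compl.preimage hσdiff.continuous)
        (diff_compl_open _ _) hx0 (by simp) hm0d hg'd hg'0
    refine ⟨E, U, hUo, hxU, hEd, ?_⟩
    intro ζ hζU hζx
    rw [hEF ζ hζU hζx]
    have hζZ' : ζ ∉ (Zset π (s + 1) : Set ℂ) := by
      intro hmem
      exact (hUsub hζU) ⟨hmem, hζx⟩
    have hζx' : ζ - (π 0 : ℂ) ≠ 0 := sub_ne_zero.mpr hζx
    rw [hg'm ζ hζZ', Matrix.adjugate_smul, ← hinv ζ hζZ']
    rw [show (Fintype.card (Fin 2) - 1) = 1 from rfl, pow_one]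
    rw [Matrix.mul_smul, smul_smul, inv_mul_cancel₀ hζx', one_smul]
  · -- case x = π t, 1 ≤ t ≤ s
    have ht1 : 1 ≤ t := by omega
    have hab : σ (π t : ℂ) = (π (t - 1) : ℂ) := by
      have := hσπ (t - 1) (by omega)
      rwa [show t - 1 + 1 = t by omega] at this
    have haZ : (π (t - 1) : ℂ) ∈ Zset π s := by
      simp only [Zset, Finset.mem_image, Finset.mem_range]
      exact ⟨t - 1, by omega, rfl⟩
    have hbZ' : (π t : ℂ) ∈ Zset π (s + 1) := by
      simp only [Zset, Finset.mem_image, Finset.mem_range]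
      exact ⟨t, by omega, rfl⟩
    obtain ⟨g, α, hgd, hgm, hg0, hg1, -, hgder⟩ :=
      residue_facts hm haZ (hωC (t - 1) (by omega)) (hw (t - 1) (by omega))
    obtain ⟨g', α', hg'd, hg'm, hg'0, hg'1, -, hg'der⟩ :=
      residue_facts hm' hbZ' (hωC t (by omega)) (hw t (by omega))
    have hrel : (ω (t - 1) : ℂ) * d₂ (π t : ℂ) = η * d₁ (π t : ℂ) * (ω t : ℂ) := by
      obtain ⟨hd2ne, hdiv⟩ := hd t ht1 (by omega)
      rw [div_eq_div_iff (hωC t (by omega)) hd2ne] at hdiv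
      linear_combination hdiv
    obtain ⟨E, U, hUo, hbU, hUsub, hEd, hEF⟩ :=
      local_ext_main η hη σ hσds (π (t - 1) : ℂ) (π t : ℂ) hab d₁ d₂ hd₁ hd₂
        (ω (t - 1) : ℂ) (ω t : ℂ) hrel g g'
        (((Zset π s : Set ℂ)) \ {(π (t - 1) : ℂ)})ᶜ
        (((Zset π (s + 1) : Set ℂ)) \ {(π t : ℂ)})ᶜ
        (diff_compl_open _ _) (diff_compl_open _ _) (by simp) (by simp)
        hgd hg'd α α' hg0 hg1 hgder hg'0 hg'1 hg'der
    refine ⟨E, U, hUo, hbU, hEd, ?_⟩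
    intro ζ hζU hζb
    rw [hEF ζ hζU hζb]
    have hζZ' : ζ ∉ (Zset π (s + 1) : Set ℂ) := by
      intro hmem
      exact (hUsub hζU) ⟨hmem, hζb⟩
    have hζZ : σ ζ ∉ (Zset π s : Set ℂ) := hσZ' ζ hζZ'
    have hζb' : ζ - (π t : ℂ) ≠ 0 := sub_ne_zero.mpr hζb
    have hσeq : σ ζ - (π (t - 1) : ℂ) = η * (ζ - (π t : ℂ)) := by
      rw [← hab, hσ ζ, hσ (π t : ℂ)]; ring
    rw [hgm (σ ζ) hζZ, hg'm ζ hζZ', Matrix.adjugate_smul, ← hinv ζ hζZ', hσeq]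
    rw [show (Fintype.card (Fin 2) - 1) = 1 from rfl, pow_one]
    rw [Matrix.smul_mul, Matrix.smul_mul, Matrix.mul_smul, smul_smul, smul_smul]
    rw [show (η * (ζ - (π t : ℂ)) * (ζ - (π t : ℂ)))⁻¹ *
        (η * (ζ - (π t : ℂ))) * (ζ - (π t : ℂ)) = 1 from by
      field_simp, one_smul]
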